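/- arXiv:2109.12604 — 2 statements merged into one kernel-verified Lean document; each statement's English description precedes it below -/
import Mathlib

section
/- Assume f = h + g with h ∈ S_{μ,L}^{1,1}(X) (0 ≤ μ ≤ L < ∞) and g convex on X. Let (λ_k, x_k, y_k, v_k) be generated by the corrected semi-implicit scheme with x₀, v₀ ∈ X: y_k = (x_k + α_k v_k)/(1+α_k); v_{k+1} = argmin_{v ∈ X} { g(v) + ⟨Aᵀλ_{k+1} + ∇h_β(y_k), v⟩ + (τ_k/(2α_k))‖v − w_k‖² } where τ_k = γ_k + μ_β α_k and w_k = (γ_k v_k + μ_β α_k y_k)/τ_k; x_{k+1} = (x_k + α_k v_{k+1})/(1+α_k); λ_{k+1} = λ_k + (α_k/θ_k)(A v_{k+1} − b); and θ_{k+1} = θ_k/(1+α_k), γ_{k+1} = (γ_k + μ_β α_k)/(1+α_k), θ₀ = 1, γ₀ > 0, with step sizes chosen so that L_β α_k² = γ_k. Define E_k = L_β(x_k, λ*) − L_β(x*, λ_k) + (γ_k/2)‖v_k − x*‖² + (θ_k/2)‖λ_k − λ*‖². Then x_k, y_k, v_k ∈ X for all k and E_{k+1} − E_k ≤ −α_k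 E_{k+1} for all k ∈ ℕ. -/
open scoped RealInnerProductSpace Pointwise

/-- The smallest singular value of a linear map between Euclidean spaces. -/
noncomputable def sigmaMin {n m : ℕ}
    (A : EuclideanSpace ℝ (Fin n) →L[ℝ] EuclideanSpace ℝ (Fin m)) : ℝ :=
  sInf {c : ℝ | ∃ x : EuclideanSpace ℝ (Fin n), ‖x‖ = 1 ∧ ‖A x‖ = c}

/-- The convex subdifferential. -/
def subdiff {n : ℕ} (f : EuclideanSpace ℝ (Fin n) → ℝ)
    (x : EuclideanSpace ℝ (Fin n)) : Set (EuclideanSpace ℝ (Fin n)) :=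
  {p | ∀ y, f x + ⟪p, y - x⟫ ≤ f y}

/-- The normal cone of `X` at `x` (empty if `x ∉ X`). -/
def normalCone {n : ℕ} (X : Set (EuclideanSpace ℝ (Fin n)))
    (x : EuclideanSpace ℝ (Fin n)) : Set (EuclideanSpace ℝ (Fin n)) :=
  {p | x ∈ X ∧ ∀ z ∈ X, ⟪p, z - x⟫ ≤ 0}

section Helpers

variable {E : Type*} [NormedAddCommGroup E] [InnerProductSpace ℝ E]

lemma key_id (a b c : E) : 2*⟪a-b, b-c⟫ = ‖a-c‖^2 - ‖a-b‖^2 - ‖b-c‖^2 := by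
  simp only [@norm_sub_sq_real E, inner_sub_left, inner_sub_right,
    real_inner_self_eq_norm_sq]
  linarith [real_inner_comm a b, real_inner_comm b c, real_inner_comm a c]

lemma combo_aux (t : ℝ) (p q : E) :
    ‖(1-t)•p + t•q‖^2 = (1-t)*‖p‖^2 + t*‖q‖^2 - t*(1-t)*‖p-q‖^2 := by
  rw [norm_add_sq_real, norm_sub_sq_real, norm_smul, norm_smul, real_inner_smul_left,
    real_inner_smul_right]
  simp only [Real.norm_eq_abs, mul_pow, sq_abs]; ring

lemma combo_id (t : ℝ) (a b c : E) :
    ‖((1-t)•a + t•b) - c‖^2 = (1-t)*‖a-c‖^2 + t*‖b-c‖^2 - t*(1-t)*‖a-b‖^2 := by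
  have h : ((1-t)•a + t•b) - c = (1-t)•(a-c) + t•(b-c) := by
    rw [smul_sub, smul_sub, sub_smul, one_smul, sub_smul, one_smul]; abel
  rw [h, combo_aux, show (a-c)-(b-c) = a-b from by abel]

/-- Strengthened optimality condition for the minimizer of a `κ`-strongly convex objective. -/
lemma strong_min {X : Set E} (hXcv : Convex ℝ X)
    {g : E → ℝ} (hgcv : ConvexOn ℝ Set.univ g) (c w vp : E) (κ : ℝ) (hκ : 0 < κ)
    (hvp : vp ∈ X)
    (hmin : ∀ u ∈ X, g vp + ⟪c,vp⟫ + κ*‖vp-w‖^2 ≤ g u + ⟪c,u⟫ + κ*‖u-w‖^2)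
    {u : E} (hu : u ∈ X) :
    g vp + ⟪c,vp⟫ + κ*‖vp-w‖^2 + κ*‖u-vp‖^2 ≤ g u + ⟪c,u⟫ + κ*‖u-w‖^2 := by
  by_contra hcon
  push_neg at hcon
  set N := ‖u-vp‖^2 with hNdef
  have hN0 : 0 ≤ N := by positivity
  set P := g vp + ⟪c,vp⟫ + κ*‖vp-w‖^2 with hP
  set Q := g u + ⟪c,u⟫ + κ*‖u-w‖^2 with hQ
  have hPQ : P ≤ Q := hmin u hu
  have hε : 0 < P + κ*N - Q := by linarith
  have hNpos : 0 < N := by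
    rcases hN0.lt_or_eq with hlt | heq
    · exact hlt
    · exfalso; rw [← heq] at hε; linarith
  set t := min (1/2 : ℝ) ((P + κ*N - Q)/(2*κ*N)) with htdef
  have ht0 : 0 < t := lt_min (by norm_num) (div_pos hε (by positivity))
  have ht1 : t ≤ 1/2 := min_le_left _ _
  have hzmem : (1-t)•vp + t•u ∈ X := hXcv hvp hu (by linarith) (le_of_lt ht0) (by ring)
  have happ := hmin _ hzmem
  have hgz : g ((1-t)•vp + t•u) ≤ (1-t)*g vp + t*g u :=
    hgcv.2 (Set.mem_univ vp) (Set.mem_univ u) (by linarith) (le_of_lt ht0) (by ring)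
  have hiz : ⟪c, (1-t)•vp + t•u⟫ = (1-t)*⟪c,vp⟫ + t*⟪c,u⟫ := by
    rw [inner_add_right, real_inner_smul_right, real_inner_smul_right]
  have hnz : ‖((1-t)•vp + t•u) - w‖^2
      = (1-t)*‖vp-w‖^2 + t*‖u-w‖^2 - t*(1-t)*N := by
    rw [combo_id, show ‖vp - u‖^2 = N from by rw [hNdef, norm_sub_rev]]
  have hkey : t*(P + κ*(1-t)*N) ≤ t*Q := by nlinarith [happ, hgz, hiz, hnz]
  have hkey2 : P + κ*(1-t)*N ≤ Q := le_of_mul_le_mul_left (by linarith [hkey]) ht0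
  have htr : t ≤ (P + κ*N - Q)/(2*κ*N) := min_le_right _ _
  have hcalc : κ * ((P + κ*N - Q)/(2*κ*N)) * N = (P + κ*N - Q)/2 := by
    field_simp
  nlinarith [mul_le_mul_of_nonneg_right (mul_le_mul_of_nonneg_left htr (le_of_lt hκ)) hN0]

end Helpers

section EuclideanHelpers

open InnerProductSpace

lemma sigmaMin_nonneg {n m : ℕ} (A : EuclideanSpace ℝ (Fin n) →L[ℝ] EuclideanSpace ℝ (Fin m)) :
    0 ≤ sigmaMin A := by
  unfold sigmaMin
  rcases Set.eq_empty_or_nonempty {c : ℝ | ∃ x : EuclideanSpace ℝ (Fin n), ‖x‖ = 1 ∧ ‖A x‖ = c}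
    with he | hne
  · rw [he, Real.sInf_empty]
  · exact le_csInf hne (by rintro c ⟨x, -, rfl⟩; positivity)

lemma sigmaMin_le {n m : ℕ} (A : EuclideanSpace ℝ (Fin n) →L[ℝ] EuclideanSpace ℝ (Fin m))
    (z : EuclideanSpace ℝ (Fin n)) : sigmaMin A * ‖z‖ ≤ ‖A z‖ := by
  rcases eq_or_ne z 0 with rfl | hz
  · simp
  · have hznorm : (0:ℝ) < ‖z‖ := norm_pos_iff.mpr hz
    have hmem : ‖A (‖z‖⁻¹ • z)‖ ∈ {c : ℝ | ∃ x : EuclideanSpace ℝ (Fin n), ‖x‖ = 1 ∧ ‖A x‖ = c} :=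
      ⟨‖z‖⁻¹ • z, by rw [norm_smul]; simp [abs_of_pos (inv_pos.mpr hznorm)]; field_simp, rfl⟩
    have hbdd : BddBelow {c : ℝ | ∃ x : EuclideanSpace ℝ (Fin n), ‖x‖ = 1 ∧ ‖A x‖ = c} :=
      ⟨0, by rintro c ⟨x, -, rfl⟩; positivity⟩
    have hle : sigmaMin A ≤ ‖A (‖z‖⁻¹ • z)‖ := csInf_le hbdd hmem
    have he : ‖A (‖z‖⁻¹ • z)‖ = ‖z‖⁻¹ * ‖A z‖ := by
      rw [map_smul, norm_smul]; simp [abs_of_pos (inv_pos.mpr hznorm)]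
    rw [he] at hle
    calc sigmaMin A * ‖z‖ ≤ (‖z‖⁻¹ * ‖A z‖) * ‖z‖ :=
          mul_le_mul_of_nonneg_right hle (le_of_lt hznorm)
      _ = ‖A z‖ := by field_simp

/-- Descent lemma from the one-sided Lipschitz-type bound on the gradient along `X`. -/
lemma descent_lemma {n : ℕ} {X : Set (EuclideanSpace ℝ (Fin n))} (hXcv : Convex ℝ X)
    {h : EuclideanSpace ℝ (Fin n) → ℝ} {gradh : EuclideanSpace ℝ (Fin n) → EuclideanSpace ℝ (Fin n)}
    {L : ℝ}
    (hgrad : ∀ z, HasGradientAt h (gradh z) z)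
    (hhlip : ∀ u ∈ X, ∀ w ∈ X, ⟪gradh u - gradh w, u - w⟫ ≤ L * ‖u - w‖^2)
    {u w : EuclideanSpace ℝ (Fin n)} (hu : u ∈ X) (hw : w ∈ X) :
    h w ≤ h u + ⟪gradh u, w - u⟫ + L/2 * ‖w - u‖^2 := by
  set d := w - u with hd
  have hseg : ∀ t : ℝ, t ∈ Set.Icc (0:ℝ) 1 → u + t • d ∈ X := by
    intro t ht
    have : (1-t) • u + t • w ∈ X := hXcv hu hw (by linarith [ht.2]) ht.1 (by ring)
    have he : (1-t) • u + t • w = u + t • d := by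
      rw [hd, smul_sub, sub_smul, one_smul]; abel
    rwa [he] at this
  have hder : ∀ t : ℝ, HasDerivAt (fun s : ℝ => h (u + s • d)) ⟪gradh (u + t • d), d⟫ t := by
    intro t
    have curve : HasDerivAt (fun s : ℝ => u + s • d) d t := by
      simpa using ((hasDerivAt_id t).smul_const d).const_add u
    have := ((hgrad (u + t • d)).hasFDerivAt.comp_hasDerivAt t curve)
    simpa [toDual_apply_apply, Function.comp_def] using this
  set s : ℝ → ℝ := fun t => h (u + t • d) - h u - t * ⟪gradh u, d⟫ - L * t^2/2 * ‖d‖^2 with hs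
  have hders : ∀ t : ℝ, HasDerivAt s (⟪gradh (u + t • d), d⟫ - ⟪gradh u, d⟫ - L * t * ‖d‖^2) t := by
    intro t
    have h1 := (hder t).sub_const (h u)
    have h2 : HasDerivAt (fun t : ℝ => t * ⟪gradh u, d⟫) ⟪gradh u, d⟫ t := by
      simpa using (hasDerivAt_id t).mul_const ⟪gradh u, d⟫
    have h3 : HasDerivAt (fun t : ℝ => L * t^2/2 * ‖d‖^2) (L * t * ‖d‖^2) t := by
      have h4 : HasDerivAt (fun t : ℝ => t^2) (2*t) t := by simpa using hasDerivAt_pow 2 t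
      have h5 := ((h4.const_mul L).div_const 2).mul_const (‖d‖^2)
      exact h5.congr_deriv (by ring)
    have h6 := (h1.sub h2).sub h3
    exact h6
  have hanti : AntitoneOn s (Set.Icc 0 1) := by
    apply antitoneOn_of_deriv_nonpos (convex_Icc 0 1)
    · exact fun t _ => ((hders t).continuousAt).continuousWithinAt
    · intro t _
      exact ((hders t).differentiableAt).differentiableWithinAt
    · intro t ht
      rw [interior_Icc] at ht
      rw [(hders t).deriv]
      have hmem : u + t • d ∈ X := hseg t ⟨le_of_lt ht.1, le_of_lt ht.2⟩
      have hl := hhlip (u + t • d) hmem u hu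
      have he : (u + t • d) - u = t • d := by abel
      rw [he] at hl
      have hinner : ⟪gradh (u + t • d) - gradh u, t • d⟫
          = t * (⟪gradh (u + t • d), d⟫ - ⟪gradh u, d⟫) := by
        rw [real_inner_smul_right, inner_sub_left]
      rw [hinner, norm_smul] at hl
      have ht0 : 0 < t := ht.1
      simp only [Real.norm_eq_abs, mul_pow, sq_abs] at hl
      nlinarith [hl]
  have h01 : s 1 ≤ s 0 :=
    hanti (Set.left_mem_Icc.mpr zero_le_one) (Set.right_mem_Icc.mpr zero_le_one) zero_le_one
  have hs0 : s 0 = 0 := by simp [hs]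
  have hs1 : s 1 = h w - h u - ⟪gradh u, d⟫ - L/2 * ‖d‖^2 := by
    simp only [hs, one_smul]
    rw [show u + d = w from by rw [hd]; abel]
    ring
  rw [hs1, hs0] at h01
  linarith

lemma quad_expand {n m : ℕ} (A : EuclideanSpace ℝ (Fin n) →L[ℝ] EuclideanSpace ℝ (Fin m))
    (b : EuclideanSpace ℝ (Fin m)) (u w : EuclideanSpace ℝ (Fin n)) :
    ‖A w - b‖^2 = ‖A u - b‖^2
      + 2*⟪(ContinuousLinearMap.adjoint A) (A u - b), w-u⟫ + ‖A (w-u)‖^2 := by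
  have h1 : A w - b = (A u - b) + A (w - u) := by rw [map_sub]; abel
  rw [h1, norm_add_sq_real, ContinuousLinearMap.adjoint_inner_left]

/-- Strong convexity of the augmented function `h + (β/2)‖A·−b‖²`. -/
lemma sc_combined {n m : ℕ} {X : Set (EuclideanSpace ℝ (Fin n))}
    {h : EuclideanSpace ℝ (Fin n) → ℝ}
    {gradh : EuclideanSpace ℝ (Fin n) → EuclideanSpace ℝ (Fin n)}
    (A : EuclideanSpace ℝ (Fin n) →L[ℝ] EuclideanSpace ℝ (Fin m))
    (b : EuclideanSpace ℝ (Fin m)) {μ β : ℝ} (hβ : 0 ≤ β)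
    (hhsc : ∀ u ∈ X, ∀ w ∈ X, h u + ⟪gradh u, w - u⟫ + μ/2 * ‖w - u‖^2 ≤ h w)
    {u w : EuclideanSpace ℝ (Fin n)} (hu : u ∈ X) (hw : w ∈ X) :
    h u + β/2*‖A u - b‖^2 + ⟪gradh u, w-u⟫
      + β*⟪(ContinuousLinearMap.adjoint A) (A u - b), w-u⟫
      + (μ + β * sigmaMin A^2)/2 * ‖w-u‖^2 ≤ h w + β/2*‖A w - b‖^2 := by
  have hq := quad_expand A b u w
  have hσ : sigmaMin A^2 * ‖w-u‖^2 ≤ ‖A (w-u)‖^2 := by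
    have h1 : (sigmaMin A * ‖w-u‖)^2 ≤ ‖A (w-u)‖^2 :=
      pow_le_pow_left₀ (mul_nonneg (sigmaMin_nonneg A) (norm_nonneg _))
        (sigmaMin_le A (w-u)) 2
    calc sigmaMin A^2 * ‖w-u‖^2 = (sigmaMin A * ‖w-u‖)^2 := by ring
      _ ≤ _ := h1
  nlinarith [hhsc u hu w hw, mul_le_mul_of_nonneg_left hσ hβ]

/-- Descent inequality for the augmented function `h + (β/2)‖A·−b‖²`. -/
lemma descent_combined {n m : ℕ}
    {h : EuclideanSpace ℝ (Fin n) → ℝ}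
    {gradh : EuclideanSpace ℝ (Fin n) → EuclideanSpace ℝ (Fin n)}
    (A : EuclideanSpace ℝ (Fin n) →L[ℝ] EuclideanSpace ℝ (Fin m))
    (b : EuclideanSpace ℝ (Fin m)) {L β : ℝ} (hβ : 0 ≤ β)
    {u w : EuclideanSpace ℝ (Fin n)}
    (hdesc : h w ≤ h u + ⟪gradh u, w - u⟫ + L/2 * ‖w - u‖^2) :
    h w + β/2*‖A w - b‖^2 ≤ h u + β/2*‖A u - b‖^2 + ⟪gradh u, w-u⟫
      + β*⟪(ContinuousLinearMap.adjoint A) (A u - b), w-u⟫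
      + (L + β*‖A‖^2)/2 * ‖w-u‖^2 := by
  have hq := quad_expand A b u w
  have hop : ‖A (w-u)‖^2 ≤ ‖A‖^2 * ‖w-u‖^2 := by
    nlinarith [A.le_opNorm (w-u), norm_nonneg (A (w-u)), norm_nonneg (w-u), A.opNorm_nonneg]
  nlinarith [hdesc, mul_le_mul_of_nonneg_left hop hβ]

end EuclideanHelpers
set_option maxHeartbeats 3000000 in
/-- Theorem 5.2 (contraction part): the corrected semi-implicit forward-backward scheme
(5.6) with step size `L_β α_k² = γ_k` keeps iterates in `X` and the Lyapunov function
contracts. -/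
theorem corrected_semi_implicit_contraction {n m : ℕ}
    (X : Set (EuclideanSpace ℝ (Fin n)))
    (hXne : X.Nonempty) (hXcl : IsClosed X) (hXcv : Convex ℝ X)
    (h g : EuclideanSpace ℝ (Fin n) → ℝ)
    (gradh : EuclideanSpace ℝ (Fin n) → EuclideanSpace ℝ (Fin n))
    (A : EuclideanSpace ℝ (Fin n) →L[ℝ] EuclideanSpace ℝ (Fin m))
    (b : EuclideanSpace ℝ (Fin m))
    (μ L β μβ Lβc : ℝ)
    (hμ : 0 ≤ μ) (hμL : μ ≤ L) (hβ : 0 ≤ β)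
    (hμβ : μβ = μ + β * sigmaMin A ^ 2)
    (hLβc : Lβc = L + β * ‖A‖ ^ 2)
    (hgrad : ∀ z, HasGradientAt h (gradh z) z)
    (hhsc : ∀ u ∈ X, ∀ w ∈ X,
      h u + ⟪gradh u, w - u⟫ + μ / 2 * ‖w - u‖ ^ 2 ≤ h w)
    (hhlip : ∀ u ∈ X, ∀ w ∈ X, ⟪gradh u - gradh w, u - w⟫ ≤ L * ‖u - w‖ ^ 2)
    (hgcv : ConvexOn ℝ Set.univ g)
    (Lβ : EuclideanSpace ℝ (Fin n) → EuclideanSpace ℝ (Fin m) → ℝ)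
    (hLβ : ∀ z w, Lβ z w = h z + β / 2 * ‖A z - b‖ ^ 2 + g z + ⟪w, A z - b⟫)
    (xs : EuclideanSpace ℝ (Fin n)) (ls : EuclideanSpace ℝ (Fin m))
    (hxs : xs ∈ X) (hKKT1 : A xs = b)
    (hKKT2 : ∃ p ∈ subdiff (fun z => h z + g z) xs, ∃ q ∈ normalCone X xs,
      p + q + (ContinuousLinearMap.adjoint A) ls = 0)
    (θ γ α : ℕ → ℝ)
    (hα : ∀ k, 0 < α k) (hθ0 : θ 0 = 1) (hγ0 : 0 < γ 0)
    (hθ : ∀ k, θ (k + 1) = θ k / (1 + α k))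
    (hγ : ∀ k, γ (k + 1) = (γ k + μβ * α k) / (1 + α k))
    (hstep : ∀ k, Lβc * α k ^ 2 = γ k)
    (lam : ℕ → EuclideanSpace ℝ (Fin m))
    (x y v ws : ℕ → EuclideanSpace ℝ (Fin n))
    (hx0 : x 0 ∈ X) (hv0 : v 0 ∈ X)
    (hy : ∀ k, (1 + α k) • y k = x k + α k • v k)
    (hws : ∀ k, (γ k + μβ * α k) • ws k = γ k • v k + (μβ * α k) • y k)
    (hvmin : ∀ k, v (k + 1) ∈ X ∧ ∀ u ∈ X,
      g (v (k + 1)) +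
        ⟪(ContinuousLinearMap.adjoint A) (lam (k + 1)) + gradh (y k)
          + β • (ContinuousLinearMap.adjoint A) (A (y k) - b), v (k + 1)⟫ +
        (γ k + μβ * α k) / (2 * α k) * ‖v (k + 1) - ws k‖ ^ 2 ≤
      g u +
        ⟪(ContinuousLinearMap.adjoint A) (lam (k + 1)) + gradh (y k)
          + β • (ContinuousLinearMap.adjoint A) (A (y k) - b), u⟫ +
        (γ k + μβ * α k) / (2 * α k) * ‖u - ws k‖ ^ 2)
    (hx : ∀ k, (1 + α k) • x (k + 1) = x k + α k • v (k + 1))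
    (hlam : ∀ k, lam (k + 1) = lam k + (α k / θ k) • (A (v (k + 1)) - b))
    (Ef : ℕ → ℝ)
    (hEf : ∀ k, Ef k = Lβ (x k) ls - Lβ xs (lam k)
      + γ k / 2 * ‖v k - xs‖ ^ 2 + θ k / 2 * ‖lam k - ls‖ ^ 2) :
    (∀ k, x k ∈ X ∧ y k ∈ X ∧ v k ∈ X) ∧
      ∀ k, Ef (k + 1) - Ef k ≤ -(α k * Ef (k + 1)) := by

  -- basic positivity facts
  have hmb0 : 0 ≤ μβ := by
    rw [hμβ]
    have : 0 ≤ β * sigmaMin A ^ 2 := mul_nonneg hβ (sq_nonneg _)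
    linarith
  have h1a : ∀ k, (0:ℝ) < 1 + α k := fun k => by linarith [hα k]
  have θpos : ∀ k, 0 < θ k := by
    intro k
    induction k with
    | zero => rw [hθ0]; norm_num
    | succ k ih => rw [hθ k]; exact div_pos ih (h1a k)
  have γpos : ∀ k, 0 < γ k := by
    intro k
    induction k with
    | zero => exact hγ0
    | succ k ih =>
      rw [hγ k]
      refine div_pos ?_ (h1a k)
      have : 0 ≤ μβ * α k := mul_nonneg hmb0 (hα k).le
      linarith
  -- membership
  have mem : ∀ k, x k ∈ X ∧ v k ∈ X := by
    intro k
    induction k with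
    | zero => exact ⟨hx0, hv0⟩
    | succ k ih =>
      have hvX : v (k+1) ∈ X := (hvmin k).1
      refine ⟨?_, hvX⟩
      have hxe : x (k+1) = (1+α k)⁻¹ • (x k + α k • v (k+1)) := by
        rw [← hx k, inv_smul_smul₀ (ne_of_gt (h1a k))]
      rw [hxe, smul_add, smul_smul]
      exact hXcv ih.1 hvX (inv_nonneg.mpr (h1a k).le)
        (mul_nonneg (inv_nonneg.mpr (h1a k).le) (hα k).le)
        (by have hne := ne_of_gt (h1a k); field_simp)
  have ymem : ∀ k, y k ∈ X := by
    intro k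
    have hye : y k = (1+α k)⁻¹ • (x k + α k • v k) := by
      rw [← hy k, inv_smul_smul₀ (ne_of_gt (h1a k))]
    rw [hye, smul_add, smul_smul]
    exact hXcv (mem k).1 (mem k).2 (inv_nonneg.mpr (h1a k).le)
      (mul_nonneg (inv_nonneg.mpr (h1a k).le) (hα k).le)
      (by have hne := ne_of_gt (h1a k); field_simp)
  refine ⟨fun k => ⟨(mem k).1, ymem k, (mem k).2⟩, ?_⟩
  intro k
  have ap := hα k
  have h1ak := h1a k
  have hne1 : (1 + α k) ≠ 0 := ne_of_gt h1ak
  have Tp := θpos k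
  have Gp := γpos k
  have τp : 0 < γ k + μβ * α k := by
    have : 0 ≤ μβ * α k := mul_nonneg hmb0 ap.le
    linarith
  have hxk := (mem k).1
  have hvk := (mem k).2
  have hyk := ymem k
  have hxp := (mem (k+1)).1
  have hvp := (mem (k+1)).2
  -- vector identities
  have hA1 : (1 + α k) • (x (k+1) - y k) = α k • (v (k+1) - v k) := by
    rw [smul_sub, hx k, hy k]; module
  have hA2 : (1 + α k) • (x (k+1) - y k) = (x k - y k) + α k • (v (k+1) - y k) := by
    rw [smul_sub, hx k]; module
  have hA3 : (1 + α k) • (A (x (k+1)) - b) = (A (x k) - b) + α k • (A (v (k+1)) - b) := by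
    have h1 : (1 + α k) • A (x (k+1)) = A (x k) + α k • A (v (k+1)) := by
      rw [← map_smul, hx k, map_add, map_smul]
    rw [smul_sub, h1]; module
  have hA4 : (γ k + μβ * α k) • (v (k+1) - ws k)
      = γ k • (v (k+1) - v k) + (μβ * α k) • (v (k+1) - y k) := by
    rw [smul_sub, hws k]; module
  have hvd : lam (k+1) - ls = (lam k - ls) + (α k / θ k) • (A (v (k+1)) - b) := by
    rw [hlam k]; abel
  -- scalar identities from vector identities
  have hI2g : (1 + α k) * ⟪gradh (y k), x (k+1) - y k⟫
      = ⟪gradh (y k), x k - y k⟫ + α k * ⟪gradh (y k), v (k+1) - y k⟫ := by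
    have hc := congrArg (fun z => ⟪gradh (y k), z⟫) hA2
    simpa only [inner_add_right, real_inner_smul_right] using hc
  have hI2q : (1 + α k) * ⟪(ContinuousLinearMap.adjoint A) (A (y k) - b), x (k+1) - y k⟫
      = ⟪(ContinuousLinearMap.adjoint A) (A (y k) - b), x k - y k⟫
        + α k * ⟪(ContinuousLinearMap.adjoint A) (A (y k) - b), v (k+1) - y k⟫ := by
    have hc := congrArg (fun z => ⟪(ContinuousLinearMap.adjoint A) (A (y k) - b), z⟫) hA2
    simpa only [inner_add_right, real_inner_smul_right] using hc
  have hI3 : (1 + α k) * ⟪ls, A (x (k+1)) - b⟫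
      = ⟪ls, A (x k) - b⟫ + α k * ⟪ls, A (v (k+1)) - b⟫ := by
    have hc := congrArg (fun z => ⟪ls, z⟫) hA3
    simpa only [inner_add_right, real_inner_smul_right] using hc
  have hI4 : (γ k + μβ * α k) * ⟪xs - v (k+1), v (k+1) - ws k⟫
      = γ k * ⟪xs - v (k+1), v (k+1) - v k⟫
        + (μβ * α k) * ⟪xs - v (k+1), v (k+1) - y k⟫ := by
    have hc := congrArg (fun z => ⟪xs - v (k+1), z⟫) hA4
    simpa only [inner_add_right, real_inner_smul_right] using hc
  have hD1 : ‖lam (k+1) - ls‖^2 = ‖lam k - ls‖^2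
      + 2*((α k / θ k) * ⟪lam k - ls, A (v (k+1)) - b⟫)
      + (α k / θ k)^2 * ‖A (v (k+1)) - b‖^2 := by
    rw [hvd, norm_add_sq_real, real_inner_smul_right, norm_smul, Real.norm_eq_abs,
      mul_pow, sq_abs]
  have hD2 : ⟪(ContinuousLinearMap.adjoint A) (lam (k+1)), v (k+1) - xs⟫
      = ⟪lam k, A (v (k+1)) - b⟫ + (α k / θ k) * ‖A (v (k+1)) - b‖^2 := by
    rw [ContinuousLinearMap.adjoint_inner_left, map_sub, hKKT1, hlam k, inner_add_left,
      real_inner_smul_left, real_inner_self_eq_norm_sq]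
  -- analytic inequalities
  have hdesc : h (x (k+1)) + β/2*‖A (x (k+1)) - b‖^2
      ≤ h (y k) + β/2*‖A (y k) - b‖^2 + ⟪gradh (y k), x (k+1) - y k⟫
        + β*⟪(ContinuousLinearMap.adjoint A) (A (y k) - b), x (k+1) - y k⟫
        + Lβc/2 * ‖x (k+1) - y k‖^2 := by
    have hd := descent_combined A b hβ (descent_lemma hXcv hgrad hhlip hyk hxp)
    rwa [← hLβc] at hd
  have hsc2 : h (y k) + β/2*‖A (y k) - b‖^2 + ⟪gradh (y k), x k - y k⟫
      + β*⟪(ContinuousLinearMap.adjoint A) (A (y k) - b), x k - y k⟫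
      + μβ/2 * ‖x k - y k‖^2 ≤ h (x k) + β/2*‖A (x k) - b‖^2 := by
    have hd := sc_combined A b hβ hhsc hyk hxk
    rwa [← hμβ] at hd
  have hscs : h (y k) + β/2*‖A (y k) - b‖^2 + ⟪gradh (y k), xs - y k⟫
      + β*⟪(ContinuousLinearMap.adjoint A) (A (y k) - b), xs - y k⟫
      + μβ/2 * ‖xs - y k‖^2 ≤ h xs + β/2*‖A xs - b‖^2 := by
    have hd := sc_combined A b hβ hhsc hyk hxs
    rwa [← hμβ] at hd
  have M1 := mul_le_mul_of_nonneg_left hdesc h1ak.le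
  have M2 := mul_le_mul_of_nonneg_left hscs ap.le
  -- convexity of g
  have F4 : (1 + α k) * g (x (k+1)) ≤ g (x k) + α k * g (v (k+1)) := by
    have hxpe : x (k+1) = (1+α k)⁻¹ • x k + ((1+α k)⁻¹ * α k) • v (k+1) := by
      rw [← smul_smul, ← smul_add, ← hx k, inv_smul_smul₀ hne1]
    have hgc := hgcv.2 (Set.mem_univ (x k)) (Set.mem_univ (v (k+1)))
      (inv_nonneg.mpr h1ak.le) (mul_nonneg (inv_nonneg.mpr h1ak.le) ap.le)
      (by have hne := ne_of_gt (h1a k); field_simp)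
    rw [← hxpe] at hgc
    simp only [smul_eq_mul] at hgc
    have hmul := mul_le_mul_of_nonneg_left hgc h1ak.le
    have e : (1+α k) * ((1+α k)⁻¹ * g (x k) + (1+α k)⁻¹ * α k * g (v (k+1)))
        = g (x k) + α k * g (v (k+1)) := by field_simp
    linarith [hmul, e]
  -- strengthened optimality of v (k+1)
  have κpos : 0 < (γ k + μβ * α k) / (2 * α k) := div_pos τp (by linarith)
  have F5S := strong_min hXcv hgcv
    ((ContinuousLinearMap.adjoint A) (lam (k + 1)) + gradh (y k)
      + β • (ContinuousLinearMap.adjoint A) (A (y k) - b)) (ws k) (v (k+1))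
    ((γ k + μβ * α k) / (2 * α k)) κpos (hvmin k).1 (hvmin k).2 hxs
  have hcvd : ⟪(ContinuousLinearMap.adjoint A) (lam (k + 1)) + gradh (y k)
        + β • (ContinuousLinearMap.adjoint A) (A (y k) - b), v (k+1)⟫
      - ⟪(ContinuousLinearMap.adjoint A) (lam (k + 1)) + gradh (y k)
        + β • (ContinuousLinearMap.adjoint A) (A (y k) - b), xs⟫
      = ⟪(ContinuousLinearMap.adjoint A) (lam (k+1)), v (k+1) - xs⟫
        + ⟪gradh (y k), v (k+1) - xs⟫
        + β * ⟪(ContinuousLinearMap.adjoint A) (A (y k) - b), v (k+1) - xs⟫ := by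
    simp only [inner_add_left, real_inner_smul_left, inner_sub_right]; ring
  have F5pp : α k * g (v (k+1)) - α k * g xs
      + α k * ⟪(ContinuousLinearMap.adjoint A) (lam (k+1)), v (k+1) - xs⟫
      + α k * ⟪gradh (y k), v (k+1) - xs⟫
      + α k * (β * ⟪(ContinuousLinearMap.adjoint A) (A (y k) - b), v (k+1) - xs⟫)
      ≤ (γ k + μβ * α k)/2
        * (‖xs - ws k‖^2 - ‖v (k+1) - ws k‖^2 - ‖xs - v (k+1)‖^2) := by
    have h2a : (0:ℝ) < 2 * α k := by linarith
    have hm := mul_le_mul_of_nonneg_left F5S h2a.le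
    have hκe : 2 * α k * ((γ k + μβ * α k) / (2 * α k)) = γ k + μβ * α k :=
      mul_div_cancel₀ _ (ne_of_gt h2a)
    have e1 : 2 * α k * ((γ k + μβ * α k) / (2 * α k) * ‖v (k+1) - ws k‖^2)
        = (γ k + μβ * α k) * ‖v (k+1) - ws k‖^2 := by rw [← mul_assoc, hκe]
    have e2 : 2 * α k * ((γ k + μβ * α k) / (2 * α k) * ‖xs - ws k‖^2)
        = (γ k + μβ * α k) * ‖xs - ws k‖^2 := by rw [← mul_assoc, hκe]
    have e3 : 2 * α k * ((γ k + μβ * α k) / (2 * α k) * ‖xs - v (k+1)‖^2)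
        = (γ k + μβ * α k) * ‖xs - v (k+1)‖^2 := by rw [← mul_assoc, hκe]
    have ecvd := congrArg (fun s => α k * s) hcvd
    linarith [hm, e1, e2, e3, ecvd]
  -- step-size inequality
  have hLsm : (1 + α k) * (Lβc/2 * ‖x (k+1) - y k‖^2) ≤ γ k/2 * ‖v (k+1) - v k‖^2 := by
    have hN1 : (1 + α k) * ‖x (k+1) - y k‖ = α k * ‖v (k+1) - v k‖ := by
      have hc := congrArg norm hA1
      rwa [norm_smul, norm_smul, Real.norm_eq_abs, Real.norm_eq_abs, abs_of_pos h1ak,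
        abs_of_pos ap] at hc
    have hsq : (1 + α k)^2 * ‖x (k+1) - y k‖^2 = α k^2 * ‖v (k+1) - v k‖^2 := by
      have hc := congrArg (fun s => s^2) hN1
      simpa only [mul_pow] using hc
    have e2 : Lβc * ((1 + α k)^2 * ‖x (k+1) - y k‖^2) = γ k * ‖v (k+1) - v k‖^2 := by
      rw [hsq, ← mul_assoc, hstep k]
    have hnn : 0 ≤ α k * (γ k * ‖v (k+1) - v k‖^2) :=
      mul_nonneg ap.le (mul_nonneg Gp.le (sq_nonneg _))
    refine le_of_mul_le_mul_left ?_ h1ak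
    linarith [e2, hnn]
  -- key-identity facts, pre-multiplied
  have ek1 := congrArg (fun s => (γ k + μβ * α k) * s) (key_id xs (v (k+1)) (ws k))
  have ek2 := congrArg (fun s => γ k * s) (key_id xs (v (k+1)) (v k))
  have ek3 := congrArg (fun s => (μβ * α k) * s) (key_id xs (v (k+1)) (y k))
  -- splitting identities, pre-multiplied
  have hvds : v (k+1) - y k = (v (k+1) - xs) + (xs - y k) := by abel
  have hsplit1 : ⟪gradh (y k), v (k+1) - y k⟫
      = ⟪gradh (y k), v (k+1) - xs⟫ + ⟪gradh (y k), xs - y k⟫ := by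
    rw [hvds, inner_add_right]
  have hsplit2 : ⟪(ContinuousLinearMap.adjoint A) (A (y k) - b), v (k+1) - y k⟫
      = ⟪(ContinuousLinearMap.adjoint A) (A (y k) - b), v (k+1) - xs⟫
        + ⟪(ContinuousLinearMap.adjoint A) (A (y k) - b), xs - y k⟫ := by
    rw [hvds, inner_add_right]
  have ehsplit1 := congrArg (fun s => α k * s) hsplit1
  have ehsplit2 := congrArg (fun s => α k * (β * s)) hsplit2
  have ehI2q := congrArg (fun s => β * s) hI2q
  have ehD2 := congrArg (fun s => α k * s) hD2
  have ehD1 := congrArg (fun s => θ k * s) hD1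
  -- dual simplifications
  have ehis : α k * ⟪lam k - ls, A (v (k+1)) - b⟫
      = α k * ⟪lam k, A (v (k+1)) - b⟫ - α k * ⟪ls, A (v (k+1)) - b⟫ := by
    rw [inner_sub_left]; ring
  have er1 : θ k * ((α k / θ k) * ⟪lam k - ls, A (v (k+1)) - b⟫)
      = α k * ⟪lam k - ls, A (v (k+1)) - b⟫ := by
    rw [← mul_assoc, mul_div_cancel₀ _ (ne_of_gt Tp)]
  have er2 : θ k * ((α k / θ k)^2 * ‖A (v (k+1)) - b‖^2)
      = α k * ((α k / θ k) * ‖A (v (k+1)) - b‖^2) := by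
    field_simp
  -- coefficient updates
  have eγ : (1 + α k) * (γ (k+1)/2 * ‖v (k+1) - xs‖^2)
      = (γ k + μβ * α k)/2 * ‖v (k+1) - xs‖^2 := by
    rw [hγ k]; field_simp
  have eθ : (1 + α k) * (θ (k+1)/2 * ‖lam (k+1) - ls‖^2)
      = θ k/2 * ‖lam (k+1) - ls‖^2 := by
    rw [hθ k]; field_simp
  -- norm reversals, pre-multiplied
  have enrg : γ k * ‖xs - v (k+1)‖^2 = γ k * ‖v (k+1) - xs‖^2 := by rw [norm_sub_rev]
  have enrm : μβ * α k * ‖xs - v (k+1)‖^2 = μβ * α k * ‖v (k+1) - xs‖^2 := by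
    rw [norm_sub_rev]
  have enrk : γ k * ‖xs - v k‖^2 = γ k * ‖v k - xs‖^2 := by rw [norm_sub_rev]
  -- dropped nonnegative terms
  have dn1 : 0 ≤ μβ * ‖x k - y k‖^2 := mul_nonneg hmb0 (sq_nonneg _)
  have dn2 : 0 ≤ μβ * α k * ‖v (k+1) - y k‖^2 :=
    mul_nonneg (mul_nonneg hmb0 ap.le) (sq_nonneg _)
  have dn3 : 0 ≤ α k * (α k / θ k) * ‖A (v (k+1)) - b‖^2 :=
    mul_nonneg (mul_nonneg ap.le (div_nonneg ap.le Tp.le)) (sq_nonneg _)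
  -- vanishing of constraint terms at xs
  have hzero : ∀ w' : EuclideanSpace ℝ (Fin m), ⟪w', A xs - b⟫ = 0 := by
    intro w'; rw [hKKT1]; simp
  -- final assembly
  have final : Ef (k+1) + α k * Ef (k+1) ≤ Ef k := by
    rw [hEf (k+1), hEf k, hLβ, hLβ, hLβ, hLβ, hzero, hzero]
    linarith [M1, hsc2, M2, F4, F5pp, hLsm, hI2g, ehI2q, ehsplit1, ehsplit2, ehD2, hI3,
      eγ, eθ, ehD1, er1, er2, ehis, ek1, hI4, ek2, ek3, enrg, enrm, enrk, dn1, dn2, dn3]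
  linarith [final]
end

section
/- Let g : ℝⁿ → ℝ ∪ {+∞} be proper, closed and convex, X ⊆ ℝⁿ nonempty closed convex with dom g ∩ X ≠ ∅, t > 0, z ∈ ℝⁿ, A ∈ ℝ^{m×n}, θ > 0, α > 0, r ∈ ℝᵐ. Define F(λ) = θλ − αA·prox_{tg}^X(z − tAᵀλ) − r, where prox_{tg}^X(x) = argmin_{y ∈ X} { g(y) + (1/(2t))‖y − x‖² }. Then for all λ, ξ ∈ ℝᵐ: θ‖λ − ξ‖² ≤ ⟨F(λ) − F(ξ), λ − ξ⟩ ≤ (θ + αt‖A‖²)‖λ − ξ‖². In particular F is monotone and (θ + αt‖A‖²)-Lipschitz continuous. -/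
open scoped RealInnerProductSpace

set_option maxHeartbeats 1000000 in
/-- Monotonicity and Lipschitz continuity (6.10) of the nonlinear map
`F(λ) = θλ − αA prox_{tg}^X(z − tAᵀλ) − r`. -/
theorem prox_map_monotone_lipschitz {n m : ℕ}
    (g : EuclideanSpace ℝ (Fin n) → ℝ)
    (X : Set (EuclideanSpace ℝ (Fin n)))
    (hgcv : ConvexOn ℝ Set.univ g)
    (hXne : X.Nonempty) (hXcl : IsClosed X) (hXcv : Convex ℝ X)
    (t : ℝ) (ht : 0 < t)
    (z : EuclideanSpace ℝ (Fin n))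
    (A : EuclideanSpace ℝ (Fin n) →L[ℝ] EuclideanSpace ℝ (Fin m))
    (θ α : ℝ) (hθ : 0 < θ) (hα : 0 < α)
    (r : EuclideanSpace ℝ (Fin m))
    (P : EuclideanSpace ℝ (Fin n) → EuclideanSpace ℝ (Fin n))
    (hP : ∀ x, P x ∈ X ∧ ∀ y ∈ X,
      g (P x) + 1 / (2 * t) * ‖P x - x‖ ^ 2 ≤ g y + 1 / (2 * t) * ‖y - x‖ ^ 2)
    (hfirm : ∀ x y, ‖P x - P y‖ ^ 2 ≤ ⟪P x - P y, x - y⟫)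
    (F : EuclideanSpace ℝ (Fin m) → EuclideanSpace ℝ (Fin m))
    (hF : ∀ w, F w = θ • w
      - α • A (P (z - t • (ContinuousLinearMap.adjoint A) w)) - r) :
    (∀ w u, θ * ‖w - u‖ ^ 2 ≤ ⟪F w - F u, w - u⟫ ∧
      ⟪F w - F u, w - u⟫ ≤ (θ + α * t * ‖A‖ ^ 2) * ‖w - u‖ ^ 2) ∧
    (∀ w u, (0:ℝ) ≤ ⟪F w - F u, w - u⟫) ∧
    LipschitzWith (θ + α * t * ‖A‖ ^ 2).toNNReal F := by
  set A' := ContinuousLinearMap.adjoint A with hA'def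
  have hAn : ‖A'‖ = ‖A‖ := ContinuousLinearMap.adjoint.norm_map A
  -- basic facts for fixed w u
  have basic : ∀ w u : EuclideanSpace ℝ (Fin m),
      F w - F u = θ • (w - u)
          - α • A (P (z - t • A' w) - P (z - t • A' u)) ∧
      ‖P (z - t • A' w) - P (z - t • A' u)‖ ≤ t * ‖A‖ * ‖w - u‖ ∧
      ⟪F w - F u, w - u⟫ = θ * ‖w - u‖ ^ 2
          + (α / t) * ⟪P (z - t • A' w) - P (z - t • A' u),
              (z - t • A' w) - (z - t • A' u)⟫ := by
    intro w u
    set xw := z - t • A' w with hxw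
    set xu := z - t • A' u with hxu
    set d := P xw - P xu with hd
    have hx : xw - xu = (-t) • (A' (w - u)) := by
      rw [hxw, hxu, map_sub, smul_sub]
      module
    have hxnorm : ‖xw - xu‖ ≤ t * ‖A‖ * ‖w - u‖ := by
      rw [hx, norm_smul]
      have := A'.le_opNorm (w - u)
      rw [hAn] at this
      calc ‖(-t)‖ * ‖A' (w - u)‖ = t * ‖A' (w - u)‖ := by
            rw [Real.norm_eq_abs, abs_neg, abs_of_pos ht]
        _ ≤ t * (‖A‖ * ‖w - u‖) := by
            exact mul_le_mul_of_nonneg_left this ht.le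
        _ = t * ‖A‖ * ‖w - u‖ := by ring
    have hdx : ‖d‖ ≤ ‖xw - xu‖ := by
      rcases eq_or_lt_of_le (norm_nonneg d) with h0 | h0
      · rw [← h0]; exact norm_nonneg _
      · have h1 : ‖d‖ ^ 2 ≤ ⟪d, xw - xu⟫ := hfirm xw xu
        have h2 : ⟪d, xw - xu⟫ ≤ ‖d‖ * ‖xw - xu‖ := real_inner_le_norm _ _
        nlinarith
    have hdnorm : ‖d‖ ≤ t * ‖A‖ * ‖w - u‖ := hdx.trans hxnorm
    have hFd : F w - F u = θ • (w - u) - α • A d := by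
      rw [hF w, hF u, hd, map_sub, smul_sub, smul_sub]
      abel
    refine ⟨hFd, hdnorm, ?_⟩
    have hadj : ⟪A d, w - u⟫ = ⟪d, A' (w - u)⟫ :=
      (ContinuousLinearMap.adjoint_inner_right A d (w - u)).symm
    have hdi : ⟪d, A' (w - u)⟫ = -(1 / t) * ⟪d, xw - xu⟫ := by
      have : ⟪d, xw - xu⟫ = (-t) * ⟪d, A' (w - u)⟫ := by
        rw [hx, real_inner_smul_right]
      field_simp at this ⊢
      linarith
    rw [hFd, inner_sub_left, real_inner_smul_left, real_inner_smul_left,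
      real_inner_self_eq_norm_sq, hadj, hdi]
    ring
  have main : ∀ w u, θ * ‖w - u‖ ^ 2 ≤ ⟪F w - F u, w - u⟫ ∧
      ⟪F w - F u, w - u⟫ ≤ (θ + α * t * ‖A‖ ^ 2) * ‖w - u‖ ^ 2 := by
    intro w u
    obtain ⟨hFd, hdnorm, hinner⟩ := basic w u
    set xw := z - t • A' w with hxw
    set xu := z - t • A' u with hxu
    set d := P xw - P xu with hd
    have hfirm' : ‖d‖ ^ 2 ≤ ⟪d, xw - xu⟫ := hfirm xw xu
    have hip : ⟪d, xw - xu⟫ ≤ ‖d‖ * ‖xw - xu‖ := real_inner_le_norm _ _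
    have hdx : ‖d‖ ≤ t * ‖A‖ * ‖w - u‖ := hdnorm
    constructor
    · rw [hinner]
      have h1 : 0 ≤ (α / t) * ⟪d, xw - xu⟫ := by
        have := (sq_nonneg ‖d‖).trans hfirm'
        positivity
      linarith
    · rw [hinner]
      have hxnorm : ‖xw - xu‖ ≤ t * ‖A‖ * ‖w - u‖ := by
        have hx : xw - xu = (-t) • (A' (w - u)) := by
          rw [hxw, hxu, map_sub, smul_sub]; module
        rw [hx, norm_smul]
        have := A'.le_opNorm (w - u)
        rw [hAn] at this
        calc ‖(-t)‖ * ‖A' (w - u)‖ = t * ‖A' (w - u)‖ := by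
              rw [Real.norm_eq_abs, abs_neg, abs_of_pos ht]
          _ ≤ t * (‖A‖ * ‖w - u‖) := mul_le_mul_of_nonneg_left this ht.le
          _ = t * ‖A‖ * ‖w - u‖ := by ring
      have hup : ⟪d, xw - xu⟫ ≤ (t * ‖A‖ * ‖w - u‖) ^ 2 := by
        have hdx' : ‖d‖ ≤ ‖xw - xu‖ := by
          rcases eq_or_lt_of_le (norm_nonneg d) with h0 | h0
          · rw [← h0]; exact norm_nonneg _
          · nlinarith
        calc ⟪d, xw - xu⟫ ≤ ‖d‖ * ‖xw - xu‖ := hip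
          _ ≤ (t * ‖A‖ * ‖w - u‖) * (t * ‖A‖ * ‖w - u‖) := by
              apply mul_le_mul (hdx'.trans hxnorm) hxnorm (norm_nonneg _)
              positivity
          _ = (t * ‖A‖ * ‖w - u‖) ^ 2 := by ring
      have hαt : 0 < α / t := by positivity
      have : (α / t) * ⟪d, xw - xu⟫ ≤ (α / t) * (t * ‖A‖ * ‖w - u‖) ^ 2 :=
        mul_le_mul_of_nonneg_left hup hαt.le
      have heq : (α / t) * (t * ‖A‖ * ‖w - u‖) ^ 2
          = α * t * ‖A‖ ^ 2 * ‖w - u‖ ^ 2 := by field_simp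
      nlinarith
  refine ⟨main, fun w u => le_trans (by positivity) (main w u).1, ?_⟩
  have hc : (0:ℝ) ≤ θ + α * t * ‖A‖ ^ 2 := by positivity
  apply LipschitzWith.of_dist_le_mul
  intro w u
  rw [Real.coe_toNNReal _ hc, dist_eq_norm, dist_eq_norm]
  obtain ⟨hFd, hdnorm, _⟩ := basic w u
  set d := P (z - t • A' w) - P (z - t • A' u) with hd
  calc ‖F w - F u‖ = ‖θ • (w - u) - α • A d‖ := by rw [hFd]
    _ ≤ ‖θ • (w - u)‖ + ‖α • A d‖ := norm_sub_le _ _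
    _ ≤ θ * ‖w - u‖ + α * (‖A‖ * (t * ‖A‖ * ‖w - u‖)) := by
        have h1 : ‖θ • (w - u)‖ = θ * ‖w - u‖ := by
          rw [norm_smul, Real.norm_eq_abs, abs_of_pos hθ]
        have h2 : ‖α • A d‖ ≤ α * (‖A‖ * (t * ‖A‖ * ‖w - u‖)) := by
          rw [norm_smul, Real.norm_eq_abs, abs_of_pos hα]
          have h3 : ‖A d‖ ≤ ‖A‖ * (t * ‖A‖ * ‖w - u‖) :=
            (A.le_opNorm d).trans
              (mul_le_mul_of_nonneg_left hdnorm (norm_nonneg A))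
          exact mul_le_mul_of_nonneg_left h3 hα.le
        linarith
    _ ≤ (θ + α * t * ‖A‖ ^ 2) * ‖w - u‖ := by nlinarith [norm_nonneg (w - u)]
end
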